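/- For the nonlinear transfer system t_i(s)² = Σ_j e^{s φ(i,j)} t_j(s), the positive solution s ↦ (t_i(s))_i is a continuously differentiable (indeed real analytic) function of s ∈ ℝ. -/

import Mathlib

open Finset


open Finset

/-- Pointwise comparison for positive solutions of the transfer system. -/
lemma transfer_le {m : ℕ} (hm : 0 < m) (φ : Fin m → Fin m → ℝ) (s : ℝ)
    (x y : Fin m → ℝ) (hx : ∀ i, 0 < x i) (hy : ∀ i, 0 < y i)
    (hex : ∀ i, x i ^ 2 = ∑ j, Real.exp (s * φ i j) * x j)
    (hey : ∀ i, y i ^ 2 = ∑ j, Real.exp (s * φ i j) * y j) :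
    ∀ i, x i ≤ y i := by
  have hne : (univ : Finset (Fin m)).Nonempty := ⟨⟨0, hm⟩, mem_univ _⟩
  obtain ⟨i₀, -, hmax⟩ := Finset.exists_max_image univ (fun i => x i / y i) hne
  set c := x i₀ / y i₀ with hc
  have hc0 : 0 < c := div_pos (hx i₀) (hy i₀)
  have hx0 : x i₀ = c * y i₀ := (div_mul_cancel₀ _ (ne_of_gt (hy i₀))).symm
  have hle : ∀ j, x j ≤ c * y j := by
    intro j
    have h := hmax j (mem_univ j)
    have h2 := (div_le_div_iff₀ (hy j) (hy i₀)).1 h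
    nlinarith [hy j, hy i₀, hx0]
  have h1 : x i₀ ^ 2 ≤ c * y i₀ ^ 2 := by
    rw [hex i₀, hey i₀, Finset.mul_sum]
    refine Finset.sum_le_sum fun j _ => ?_
    rw [mul_left_comm]
    exact mul_le_mul_of_nonneg_left (hle j) (Real.exp_pos _).le
  have hx2 : x i₀ ^ 2 = c ^ 2 * y i₀ ^ 2 := by rw [hx0]; ring
  have hc1 : c ≤ 1 := by
    nlinarith [hx2, h1, hc0, mul_pos (mul_pos hc0 (hy i₀)) (hy i₀)]
  intro j
  calc x j ≤ c * y j := hle j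
    _ ≤ 1 * y j := mul_le_mul_of_nonneg_right hc1 (hy j).le
    _ = y j := one_mul _

lemma transfer_uniq {m : ℕ} (hm : 0 < m) (φ : Fin m → Fin m → ℝ) (s : ℝ)
    (x y : Fin m → ℝ) (hx : ∀ i, 0 < x i) (hy : ∀ i, 0 < y i)
    (hex : ∀ i, x i ^ 2 = ∑ j, Real.exp (s * φ i j) * x j)
    (hey : ∀ i, y i ^ 2 = ∑ j, Real.exp (s * φ i j) * y j) :
    x = y :=
  funext fun i => le_antisymm (transfer_le hm φ s x y hx hy hex hey i)
    (transfer_le hm φ s y x hy hx hey hex i)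

/-- Kernel triviality for the linearized system. -/
lemma transfer_inj {m : ℕ} (hm : 0 < m) (φ : Fin m → Fin m → ℝ) (s : ℝ)
    (t : Fin m → ℝ) (ht : ∀ i, 0 < t i)
    (hteq : ∀ i, t i ^ 2 = ∑ j, Real.exp (s * φ i j) * t j)
    (v : Fin m → ℝ)
    (hv : ∀ i, 2 * t i * v i = ∑ j, Real.exp (s * φ i j) * v j) :
    v = 0 := by
  have hne : (univ : Finset (Fin m)).Nonempty := ⟨⟨0, hm⟩, mem_univ _⟩
  obtain ⟨i₀, -, hmax⟩ := Finset.exists_max_image univ (fun i => |v i| / t i) hne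
  set c := |v i₀| / t i₀ with hc
  have hc0 : 0 ≤ c := div_nonneg (abs_nonneg _) (ht i₀).le
  have hv0 : |v i₀| = c * t i₀ := (div_mul_cancel₀ _ (ne_of_gt (ht i₀))).symm
  have hle : ∀ j, |v j| ≤ c * t j := by
    intro j
    have h := hmax j (mem_univ j)
    have h2 := (div_le_div_iff₀ (ht j) (ht i₀)).1 h
    nlinarith [ht j, ht i₀, hv0]
  have h1 : 2 * t i₀ * |v i₀| ≤ c * t i₀ ^ 2 := by
    calc 2 * t i₀ * |v i₀| = |2 * t i₀ * v i₀| := by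
          rw [abs_mul, abs_of_pos (by linarith [ht i₀] : (0:ℝ) < 2 * t i₀)]
      _ = |∑ j, Real.exp (s * φ i₀ j) * v j| := by rw [hv i₀]
      _ ≤ ∑ j, |Real.exp (s * φ i₀ j) * v j| := Finset.abs_sum_le_sum_abs _ _
      _ ≤ ∑ j, Real.exp (s * φ i₀ j) * (c * t j) := by
          refine Finset.sum_le_sum fun j _ => ?_
          rw [abs_mul, abs_of_pos (Real.exp_pos _)]
          exact mul_le_mul_of_nonneg_left (hle j) (Real.exp_pos _).le
      _ = c * ∑ j, Real.exp (s * φ i₀ j) * t j := by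
          rw [Finset.mul_sum]; exact Finset.sum_congr rfl fun j _ => by ring
      _ = c * t i₀ ^ 2 := by rw [← hteq i₀]
  have hv2 : 2 * t i₀ * |v i₀| = 2 * c * t i₀ ^ 2 := by rw [hv0]; ring
  have hc1 : c ≤ 0 := by nlinarith [hv2, h1, mul_pos (ht i₀) (ht i₀)]
  have hcz : c = 0 := le_antisymm hc1 hc0
  funext j
  have : |v j| ≤ 0 := by
    have := hle j; rw [hcz] at this; linarith
  simpa [abs_nonpos_iff] using this


lemma transfer_analyticAt {m : ℕ} (hm : 0 < m) (φ : Fin m → Fin m → ℝ)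
    (t : ℝ → Fin m → ℝ) (ht : ∀ s i, 0 < t s i)
    (heq : ∀ s i, (t s i) ^ 2 = ∑ j, Real.exp (s * φ i j) * t s j)
    (uniq : ∀ (s : ℝ) (x y : Fin m → ℝ), (∀ i, 0 < x i) → (∀ i, 0 < y i) →
      (∀ i, x i ^ 2 = ∑ j, Real.exp (s * φ i j) * x j) →
      (∀ i, y i ^ 2 = ∑ j, Real.exp (s * φ i j) * y j) → x = y)
    (inj : ∀ s (τ : Fin m → ℝ), (∀ i, 0 < τ i) →
      (∀ i, τ i ^ 2 = ∑ j, Real.exp (s * φ i j) * τ j) →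
      ∀ v : Fin m → ℝ, (∀ i, 2 * τ i * v i = ∑ j, Real.exp (s * φ i j) * v j) → v = 0)
    (s₀ : ℝ) : AnalyticAt ℝ t s₀ := by
  classical
  set f : ℝ × (Fin m → ℝ) → Fin m → ℝ :=
    fun q i => (q.2 i) ^ 2 - ∑ j, Real.exp (q.1 * φ i j) * q.2 j with hf
  set Φ : ℝ × (Fin m → ℝ) → ℝ × (Fin m → ℝ) := fun q => (q.1, f q) with hΦdef
  set p : ℝ × (Fin m → ℝ) := (s₀, t s₀) with hp
  -- analyticity of Φ
  have hΦa : ∀ q, AnalyticAt ℝ Φ q := by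
    intro q
    refine AnalyticAt.prod analyticAt_fst ?_
    refine AnalyticAt.pi fun i => AnalyticAt.sub ?_ ?_
    · exact (((ContinuousLinearMap.proj i).comp
        (ContinuousLinearMap.snd ℝ ℝ (Fin m → ℝ))).analyticAt q).pow 2
    · refine Finset.analyticAt_fun_sum _ fun j _ => AnalyticAt.fun_mul ?_
        (((ContinuousLinearMap.proj j).comp
          (ContinuousLinearMap.snd ℝ ℝ (Fin m → ℝ))).analyticAt q)
      exact analyticAt_rexp.comp (analyticAt_fst.mul analyticAt_const)
  -- derivative rows
  have hprojF : ∀ (j : Fin m),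
      HasFDerivAt (fun q : ℝ × (Fin m → ℝ) => q.2 j)
        ((ContinuousLinearMap.proj j).comp (ContinuousLinearMap.snd ℝ ℝ (Fin m → ℝ))) p :=
    fun j => ((ContinuousLinearMap.proj j).comp
      (ContinuousLinearMap.snd ℝ ℝ (Fin m → ℝ))).hasFDerivAt
  have hFrow : ∀ i : Fin m, ∃ row : (ℝ × (Fin m → ℝ)) →L[ℝ] ℝ,
      HasFDerivAt (fun q : ℝ × (Fin m → ℝ) => f q i) row p ∧
      ∀ σ (v : Fin m → ℝ), row (σ, v) =
        2 * t s₀ i * v i - ∑ j, (Real.exp (s₀ * φ i j) * v j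
          + t s₀ j * (Real.exp (s₀ * φ i j) * (φ i j * σ))) := by
    intro i
    have hsq : HasFDerivAt (fun q : ℝ × (Fin m → ℝ) => q.2 i ^ 2)
        ((t s₀ i) • ((ContinuousLinearMap.proj i).comp (ContinuousLinearMap.snd ℝ ℝ (Fin m → ℝ)))
          + (t s₀ i) • ((ContinuousLinearMap.proj i).comp (ContinuousLinearMap.snd ℝ ℝ (Fin m → ℝ)))) p := by
      simpa [pow_two] using (hprojF i).fun_mul (hprojF i)
    refine ⟨_, hsq.sub
      (HasFDerivAt.fun_sum fun j _ =>
        ((hasFDerivAt_fst.mul_const (φ i j)).exp).fun_mul (hprojF j)), ?_⟩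
    intro σ v
    simp [smul_eq_mul]
    ring
  choose row hrow hrowval using hFrow
  have hΦd : HasFDerivAt Φ ((ContinuousLinearMap.fst ℝ ℝ (Fin m → ℝ)).prod
      (ContinuousLinearMap.pi row)) p :=
    hasFDerivAt_fst.prodMk (hasFDerivAt_pi.2 hrow)
  set M : (ℝ × (Fin m → ℝ)) →L[ℝ] ℝ × (Fin m → ℝ) :=
    (ContinuousLinearMap.fst ℝ ℝ (Fin m → ℝ)).prod (ContinuousLinearMap.pi row) with hM
  -- injectivity of M
  have hMinj : Function.Injective M := by
    intro z z' hzz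
    have h0 : M (z - z') = 0 := by rw [map_sub, hzz, sub_self]
    set w := z - z' with hw
    have h1 : w.1 = 0 := congrArg Prod.fst h0
    have h2 : ∀ i, row i (w.1, w.2) = 0 := fun i => congrFun (congrArg Prod.snd h0) i
    have h3 : ∀ i, 2 * t s₀ i * w.2 i = ∑ j, Real.exp (s₀ * φ i j) * w.2 j := by
      intro i
      have h4 := h2 i
      rw [h1, hrowval i 0 w.2] at h4
      have h5 : 2 * t s₀ i * w.2 i - ∑ j, Real.exp (s₀ * φ i j) * w.2 j = 0 := by
        simpa using h4
      linarith [h5]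
    have hv0 : w.2 = 0 := inj s₀ (t s₀) (ht s₀) (heq s₀) w.2 h3
    have hwz : w = 0 := Prod.ext_iff.2 ⟨h1, hv0⟩
    exact sub_eq_zero.1 hwz
  have hMsurj : Function.Surjective M :=
    LinearMap.injective_iff_surjective.1 hMinj
  set eL : (ℝ × (Fin m → ℝ)) ≃L[ℝ] ℝ × (Fin m → ℝ) :=
    (LinearEquiv.ofBijective (M : (ℝ × (Fin m → ℝ)) →ₗ[ℝ] ℝ × (Fin m → ℝ))
      ⟨hMinj, hMsurj⟩).toContinuousLinearEquiv with heLdef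
  have heL : (eL : (ℝ × (Fin m → ℝ)) →L[ℝ] ℝ × (Fin m → ℝ)) = M := by
    ext z <;> rfl
  have hstrict : HasStrictFDerivAt Φ
      (eL : (ℝ × (Fin m → ℝ)) →L[ℝ] ℝ × (Fin m → ℝ)) p := by
    rw [heL]
    exact ((hΦa p).contDiffAt (n := 1)).hasStrictFDerivAt' hΦd one_ne_zero
  set PH := hstrict.toOpenPartialHomeomorph Φ with hPH
  have hsource : p ∈ PH.source := hstrict.mem_toOpenPartialHomeomorph_source
  have hcoe : (PH : ℝ × (Fin m → ℝ) → ℝ × (Fin m → ℝ)) = Φ :=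
    hstrict.toOpenPartialHomeomorph_coe
  obtain ⟨ps, hps⟩ := hΦa p
  have hpsPH : HasFPowerSeriesAt (⇑PH) ps p := by rw [hcoe]; exact hps
  have p1 : ps 1 = (continuousMultilinearCurryFin1 ℝ (ℝ × (Fin m → ℝ)) (ℝ × (Fin m → ℝ))).symm
      (eL : (ℝ × (Fin m → ℝ)) →L[ℝ] ℝ × (Fin m → ℝ)) := by
    have h1 := hps.hasFDerivAt
    have h2 : (continuousMultilinearCurryFin1 ℝ (ℝ × (Fin m → ℝ)) (ℝ × (Fin m → ℝ))) (ps 1)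
        = (eL : (ℝ × (Fin m → ℝ)) →L[ℝ] ℝ × (Fin m → ℝ)) :=
      h1.unique hstrict.hasFDerivAt
    rw [← h2]
    exact ((continuousMultilinearCurryFin1 ℝ _ _).symm_apply_apply _).symm
  have hsymm := PH.hasFPowerSeriesAt_symm hsource hpsPH p1
  have hΦp : Φ p = (s₀, (0 : Fin m → ℝ)) := by
    refine Prod.ext_iff.2 ⟨rfl, ?_⟩
    funext i
    simp only [hΦdef, hf, hp, Pi.zero_apply]
    rw [sub_eq_zero]
    exact heq s₀ i
  have hPHp : PH p = (s₀, (0 : Fin m → ℝ)) := by rw [hcoe]; exact hΦp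
  have hgan : AnalyticAt ℝ (⇑PH.symm) (s₀, (0 : Fin m → ℝ)) := by
    rw [← hPHp]
    exact hsymm.analyticAt
  set u : ℝ → Fin m → ℝ := fun s => (PH.symm (s, (0 : Fin m → ℝ))).2 with hu
  have hj : AnalyticAt ℝ (fun s : ℝ => ((s, (0 : Fin m → ℝ)) : ℝ × (Fin m → ℝ))) s₀ :=
    analyticAt_id.prod analyticAt_const
  have huan : AnalyticAt ℝ u s₀ :=
    analyticAt_snd.comp (hgan.comp_of_eq hj rfl)
  -- eventual equality
  have hmem : ∀ᶠ s in nhds s₀, ((s, (0 : Fin m → ℝ)) : ℝ × (Fin m → ℝ)) ∈ PH.target := by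
    have ht' : PH.target ∈ nhds (PH p) := PH.open_target.mem_nhds (PH.map_source hsource)
    rw [hPHp] at ht'
    exact (continuous_id.prodMk continuous_const).continuousAt.preimage_mem_nhds ht'
  have hsolve : ∀ᶠ s in nhds s₀, ∀ i, (u s i) ^ 2 = ∑ j, Real.exp (s * φ i j) * u s j := by
    filter_upwards [hmem] with s hs
    have hri := PH.right_inv hs
    rw [hcoe] at hri
    have h1 : (PH.symm (s, (0 : Fin m → ℝ))).1 = s := congrArg Prod.fst hri
    intro i
    have h2 : f (PH.symm (s, (0 : Fin m → ℝ))) i = 0 :=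
      congrFun (congrArg Prod.snd hri) i
    simp only [hf] at h2
    rw [h1] at h2
    have := sub_eq_zero.1 h2
    exact this
  have hus₀ : u s₀ = t s₀ := by
    have : PH.symm (s₀, (0 : Fin m → ℝ)) = p := by
      rw [← hPHp]; exact PH.left_inv hsource
    rw [hu]; simp only [this, hp]
  have hpos : ∀ᶠ s in nhds s₀, ∀ i, 0 < u s i := by
    rw [Filter.eventually_all]
    intro i
    have hc : ContinuousAt (fun s => u s i) s₀ :=
      (continuous_apply i).continuousAt.comp huan.continuousAt
    have h0 : 0 < u s₀ i := by rw [hus₀]; exact ht s₀ i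
    exact continuousAt_const.eventually_lt hc h0
  have hequt : ∀ᶠ s in nhds s₀, t s = u s := by
    filter_upwards [hsolve, hpos] with s hs hp2
    exact uniq s (t s) (u s) (ht s) hp2 (heq s) hs
  exact huan.congr (Filter.EventuallyEq.symm hequt)

/-- The strictly positive solution `s ↦ (t_i(s))_i` of the transfer system
`t_i(s)² = ∑_j e^{sφ(i,j)} t_j(s)` is continuously differentiable, indeed real analytic,
as a function of `s`. -/
theorem transfer_system_solution_smooth
    (m : ℕ) (hm : 2 ≤ m) (φ : Fin m → Fin m → ℝ)
    (t : ℝ → Fin m → ℝ)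
    (ht : ∀ s i, 0 < t s i)
    (heq : ∀ s i, (t s i) ^ 2 = ∑ j, Real.exp (s * φ i j) * t s j) :
    ContDiff ℝ 1 t ∧ AnalyticOn ℝ t Set.univ := by
  have hm0 : 0 < m := by omega
  have hA : ∀ s, AnalyticAt ℝ t s := fun s =>
    transfer_analyticAt hm0 φ t ht heq
      (fun s x y hx hy hex hey => transfer_uniq hm0 φ s x y hx hy hex hey)
      (fun s τ hτ hτeq v hv => transfer_inj hm0 φ s τ hτ hτeq v hv) s
  constructor
  · exact contDiff_iff_contDiffAt.2 fun s => (hA s).contDiffAt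
  · exact fun x _ => (hA x).analyticWithinAt
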